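/- Let α ∈ (1,3/2) and suppose the constants γ_1, γ_3 ≥ 0 and the density f_p has the form f_p = (γ_1 + 1/α)·(1-p)/2 · Σ_{k=0}^{M-2} (p_{b̄_k}/2^k)·1_{[-S^k(1), α-S^k(1))} + (1/α + γ_3)·p/2 · Σ_{k=0}^{M-2} (p_{b_k}/2^k)·1_{[S^k(1)-α, S^k(1))}, with S^k(1) ∈ [α-1,1] and α-S^k(1) ∈ [α-1,1] for k < M-1. Then f_p(x) ≤ 1/α - (1-p)(γ_1 + 1/α)/2 for all x > α-1, and f_p(x) ≤ 1/α - p(1/α + γ_3)/2 for all x < 1-α. -/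
import Mathlib


/-- The symmetric doubling map `S_α`. -/
noncomputable def symDoubling (α : ℝ) (x : ℝ) : ℝ :=
  if x < -(1/2) then 2*x + α else if x ≤ 1/2 then 2*x else 2*x - α

/-- Let `α ∈ (1,3/2)`, `p ∈ (0,1)`, `γ₁, γ₃ ≥ 0`, and `M ≥ 2` (the random matching
exponent).  Suppose `S^k(1) ∈ [α-1,1]` and `α - S^k(1) ∈ [α-1,1]` for all `k < M-1`, let
`w k = p_{b_k}` and `wbar k = p_{b̄_k}` be the weights of the digit word of `1` and of its
complement (`p_0 = p`, `p_1 = 1-p`), and suppose the density has the form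
`f = (γ₁+1/α)·(1-p)/2·Σ_{k=0}^{M-2} (p_{b̄_k}/2^k)·1_{[-S^k(1), α-S^k(1))}
  + (1/α+γ₃)·p/2·Σ_{k=0}^{M-2} (p_{b_k}/2^k)·1_{[S^k(1)-α, S^k(1))}`,
normalised so that its constant value on `[1-α,α-1]` is `1/α`.  Then
`f(x) ≤ 1/α - (1-p)(γ₁+1/α)/2` for all `x > α-1`, and
`f(x) ≤ 1/α - p(1/α+γ₃)/2` for all `x < 1-α`. -/
theorem stmt18 (α p γ₁ γ₃ : ℝ) (M : ℕ)
    (hα : α ∈ Set.Ioo (1:ℝ) (3/2)) (hp : p ∈ Set.Ioo (0:ℝ) 1)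
    (hγ₁ : 0 ≤ γ₁) (hγ₃ : 0 ≤ γ₃) (hM : 2 ≤ M)
    (horb : ∀ k < M - 1,
      (symDoubling α)^[k] 1 ∈ Set.Icc (α-1) 1 ∧
      α - (symDoubling α)^[k] 1 ∈ Set.Icc (α-1) 1)
    (w wbar : ℕ → ℝ)
    (hw : ∀ k, w k = ∏ n ∈ Finset.range k,
      (if 1/2 < (symDoubling α)^[n] 1 then 1 - p else p))
    (hwbar : ∀ k, wbar k = ∏ n ∈ Finset.range k,
      (if 1/2 < (symDoubling α)^[n] 1 then p else 1 - p))
    (f : ℝ → ℝ)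
    (hf : ∀ x, f x =
      (γ₁ + 1/α) * ((1-p)/2) * ∑ k ∈ Finset.range (M-1), (wbar k / 2^k) *
        Set.indicator
          (Set.Ico (-((symDoubling α)^[k] 1)) (α - (symDoubling α)^[k] 1))
          (fun _ => (1:ℝ)) x
      + (1/α + γ₃) * (p/2) * ∑ k ∈ Finset.range (M-1), (w k / 2^k) *
        Set.indicator
          (Set.Ico ((symDoubling α)^[k] 1 - α) ((symDoubling α)^[k] 1))
          (fun _ => (1:ℝ)) x)
    (hnorm : (γ₁ + 1/α) * ((1-p)/2) * (∑ k ∈ Finset.range (M-1), wbar k / 2^k)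
      + (1/α + γ₃) * (p/2) * (∑ k ∈ Finset.range (M-1), w k / 2^k) = 1/α) :
    (∀ x : ℝ, α - 1 < x → f x ≤ 1/α - (1-p) * (γ₁ + 1/α) / 2) ∧
    (∀ x : ℝ, x < 1 - α → f x ≤ 1/α - p * (1/α + γ₃) / 2) := by

  obtain ⟨hα1, hα2⟩ := hα
  obtain ⟨hp0, hp1⟩ := hp
  have hα0 : (0:ℝ) < 1/α := by positivity
  have hA : 0 ≤ (γ₁ + 1/α) * ((1-p)/2) := by nlinarith
  have hB : 0 ≤ (1/α + γ₃) * (p/2) := by nlinarith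
  have hwnn : ∀ k, 0 ≤ w k := fun k => by
    rw [hw]; exact Finset.prod_nonneg fun n _ => by split <;> linarith
  have hwbarnn : ∀ k, 0 ≤ wbar k := fun k => by
    rw [hwbar]; exact Finset.prod_nonneg fun n _ => by split <;> linarith
  have hw0 : w 0 = 1 := by simp [hw]
  have hwbar0 : wbar 0 = 1 := by simp [hwbar]
  have hind : ∀ (s : Set ℝ) (x : ℝ),
      0 ≤ Set.indicator s (fun _ => (1:ℝ)) x ∧ Set.indicator s (fun _ => (1:ℝ)) x ≤ 1 := by
    intro s x; by_cases h : x ∈ s <;> simp [Set.indicator, h]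
  have h0M : 0 ∈ Finset.range (M-1) := by simp; omega
  constructor
  · intro x hx
    have hI0 : Set.indicator
        (Set.Ico (-((symDoubling α)^[0] 1)) (α - (symDoubling α)^[0] 1))
        (fun _ => (1:ℝ)) x = 0 := by
      apply Set.indicator_of_notMem
      simp only [Function.iterate_zero, id, Set.mem_Ico, not_and, not_lt]
      intro _; linarith
    have hS1 : ∑ k ∈ Finset.range (M-1), (wbar k / 2^k) *
        Set.indicator
          (Set.Ico (-((symDoubling α)^[k] 1)) (α - (symDoubling α)^[k] 1))
          (fun _ => (1:ℝ)) x ≤ (∑ k ∈ Finset.range (M-1), wbar k / 2^k) - 1 := by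
      have e : ∑ k ∈ Finset.range (M-1), wbar k / 2^k
          = ∑ k ∈ (Finset.range (M-1)).erase 0, wbar k / 2^k + wbar 0 / 2^0 :=
        (Finset.sum_erase_add _ _ h0M).symm
      rw [← Finset.sum_erase_add _ _ h0M, e, hI0, hwbar0]
      simp only [mul_zero, add_zero, pow_zero, div_one]
      have : ∑ k ∈ (Finset.range (M-1)).erase 0, (wbar k / 2^k) *
          Set.indicator
            (Set.Ico (-((symDoubling α)^[k] 1)) (α - (symDoubling α)^[k] 1))
            (fun _ => (1:ℝ)) x ≤ ∑ k ∈ (Finset.range (M-1)).erase 0, wbar k / 2^k := by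
        apply Finset.sum_le_sum
        intro k _
        exact mul_le_of_le_one_right (div_nonneg (by first | exact hwbarnn _ | exact hwnn _) (by positivity)) (hind _ x).2
      linarith
    have hS2 : ∑ k ∈ Finset.range (M-1), (w k / 2^k) *
        Set.indicator
          (Set.Ico ((symDoubling α)^[k] 1 - α) ((symDoubling α)^[k] 1))
          (fun _ => (1:ℝ)) x ≤ ∑ k ∈ Finset.range (M-1), w k / 2^k := by
      apply Finset.sum_le_sum
      intro k _
      exact mul_le_of_le_one_right (div_nonneg (by first | exact hwbarnn _ | exact hwnn _) (by positivity)) (hind _ x).2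
    rw [hf x]
    nlinarith [mul_le_mul_of_nonneg_left hS1 hA, mul_le_mul_of_nonneg_left hS2 hB]
  · intro x hx
    have hI0 : Set.indicator
        (Set.Ico ((symDoubling α)^[0] 1 - α) ((symDoubling α)^[0] 1))
        (fun _ => (1:ℝ)) x = 0 := by
      apply Set.indicator_of_notMem
      simp only [Function.iterate_zero, id, Set.mem_Ico, not_and, not_lt]
      intro h; linarith
    have hS2 : ∑ k ∈ Finset.range (M-1), (w k / 2^k) *
        Set.indicator
          (Set.Ico ((symDoubling α)^[k] 1 - α) ((symDoubling α)^[k] 1))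
          (fun _ => (1:ℝ)) x ≤ (∑ k ∈ Finset.range (M-1), w k / 2^k) - 1 := by
      have e : ∑ k ∈ Finset.range (M-1), w k / 2^k
          = ∑ k ∈ (Finset.range (M-1)).erase 0, w k / 2^k + w 0 / 2^0 :=
        (Finset.sum_erase_add _ _ h0M).symm
      rw [← Finset.sum_erase_add _ _ h0M, e, hI0, hw0]
      simp only [mul_zero, add_zero, pow_zero, div_one]
      have : ∑ k ∈ (Finset.range (M-1)).erase 0, (w k / 2^k) *
          Set.indicator
            (Set.Ico ((symDoubling α)^[k] 1 - α) ((symDoubling α)^[k] 1))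
            (fun _ => (1:ℝ)) x ≤ ∑ k ∈ (Finset.range (M-1)).erase 0, w k / 2^k := by
        apply Finset.sum_le_sum
        intro k _
        exact mul_le_of_le_one_right (div_nonneg (by first | exact hwbarnn _ | exact hwnn _) (by positivity)) (hind _ x).2
      linarith
    have hS1 : ∑ k ∈ Finset.range (M-1), (wbar k / 2^k) *
        Set.indicator
          (Set.Ico (-((symDoubling α)^[k] 1)) (α - (symDoubling α)^[k] 1))
          (fun _ => (1:ℝ)) x ≤ ∑ k ∈ Finset.range (M-1), wbar k / 2^k := by
      apply Finset.sum_le_sum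
      intro k _
      exact mul_le_of_le_one_right (div_nonneg (by first | exact hwbarnn _ | exact hwnn _) (by positivity)) (hind _ x).2
    rw [hf x]
    nlinarith [mul_le_mul_of_nonneg_left hS1 hA, mul_le_mul_of_nonneg_left hS2 hB]
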